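/- Let F : H → H be a monotone operator that is Fréchet differentiable on H, let f_δ ∈ H, let a : [0,∞) → ℝ be differentiable with a(t) > 0 for all t, and let V : [0,∞) → H be differentiable with F(V(t)) + a(t)V(t) = f_δ for all t ≥ 0. Then for every t ≥ 0: a(t)‖V'(t)‖ ≤ |a'(t)|·‖V(t)‖, i.e., ‖V'(t)‖ ≤ (|a'(t)|/a(t))·‖V(t)‖. -/

import Mathlib

open scoped RealInnerProductSpace

open Filter Topology Set

lemma fderiv_inner_nonneg {H : Type*} [NormedAddCommGroup H] [InnerProductSpace ℝ H]
    (F : H → H) (hF : ∀ u v : H, 0 ≤ ⟪F u - F v, u - v⟫)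
    (hFd : Differentiable ℝ F) (u h : H) : 0 ≤ ⟪fderiv ℝ F u h, h⟫ := by
  set c : ℝ → H := fun s => F (u + s • h) with hc
  have hderiv : HasDerivAt c (fderiv ℝ F u h) 0 := by
    have h1 : HasDerivAt (fun s : ℝ => u + s • h) h 0 := by
      simpa using ((hasDerivAt_id (0:ℝ)).smul_const h).const_add u
    have := (hFd (u + (0:ℝ) • h)).hasFDerivAt.comp_hasDerivAt 0 h1
    simp only [zero_smul, add_zero] at this
    exact this
  have htend := hasDerivAt_iff_tendsto_slope.mp hderiv
  have htend2 : Tendsto (fun s => ⟪slope c 0 s, h⟫) (𝓝[≠] (0:ℝ))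
      (𝓝 ⟪fderiv ℝ F u h, h⟫) :=
    ((continuous_inner.comp (Continuous.prodMk continuous_id continuous_const)).continuousAt).tendsto.comp htend
  refine ge_of_tendsto htend2 ?_
  filter_upwards [self_mem_nhdsWithin] with s hs
  have hs0 : s ≠ 0 := hs
  have key : 0 ≤ ⟪F (u + s • h) - F u, s • h⟫ := by simpa using hF (u + s • h) u
  have : slope c 0 s = s⁻¹ • (F (u + s • h) - F u) := by
    simp [slope, hc, vsub_eq_sub]
  rw [this, real_inner_smul_left]
  rw [real_inner_smul_right] at key
  have heq : s⁻¹ * ⟪F (u + s • h) - F u, h⟫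
      = (s * ⟪F (u + s • h) - F u, h⟫) / s ^ 2 := by
    field_simp
  rw [heq]
  exact div_nonneg key (by positivity)

theorem stmt16 {H : Type*} [NormedAddCommGroup H] [InnerProductSpace ℝ H]
    (F : H → H) (hF : ∀ u v : H, 0 ≤ ⟪F u - F v, u - v⟫)
    (hFd : Differentiable ℝ F) (fδ : H)
    (a a' : ℝ → ℝ) (ha : ∀ t : ℝ, 0 ≤ t → HasDerivAt a (a' t) t)
    (hapos : ∀ t : ℝ, 0 ≤ t → 0 < a t)
    (V V' : ℝ → H) (hVd : ∀ t : ℝ, 0 ≤ t → HasDerivAt V (V' t) t)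
    (hV : ∀ t : ℝ, 0 ≤ t → F (V t) + a t • V t = fδ) :
    ∀ t : ℝ, 0 ≤ t →
      a t * ‖V' t‖ ≤ |a' t| * ‖V t‖ ∧ ‖V' t‖ ≤ |a' t| / a t * ‖V t‖ := by
  intro t ht
  -- derivative of G := F ∘ V + a • V
  set D : H := fderiv ℝ F (V t) (V' t) + a' t • V t + a t • V' t with hD
  have hG : HasDerivAt (fun s => F (V s) + a s • V s) D t := by
    have h1 : HasDerivAt (fun s => F (V s)) (fderiv ℝ F (V t) (V' t)) t :=
      (hFd (V t)).hasFDerivAt.comp_hasDerivAt t (hVd t ht)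
    have h2 : HasDerivAt (fun s => a s • V s) (a t • V' t + a' t • V t) t :=
      (ha t ht).smul (hVd t ht)
    have h12 := h1.add h2
    rw [hD]
    convert h12 using 1
    abel
    rfl
    abel
  have hD0 : D = 0 := by
    have hGwithin : HasDerivWithinAt (fun s => F (V s) + a s • V s) D (Ici t) t :=
      hG.hasDerivWithinAt
    have hconst : HasDerivWithinAt (fun s => F (V s) + a s • V s) 0 (Ici t) t := by
      have : HasDerivWithinAt (fun _ : ℝ => fδ) 0 (Ici t) t :=
        (hasDerivAt_const t fδ).hasDerivWithinAt
      exact this.congr (fun x hx => (hV x (le_trans ht hx)).symm ▸ rfl) (by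
        simpa using hV t ht)
    exact (uniqueDiffOn_Ici t t self_mem_Ici).eq_deriv _ hGwithin hconst
  -- inner product with V' t
  have hinner : ⟪fderiv ℝ F (V t) (V' t), V' t⟫ + a' t * ⟪V t, V' t⟫
      + a t * ‖V' t‖ ^ 2 = 0 := by
    have := congrArg (fun x => ⟪x, V' t⟫) hD0
    simpa [hD, inner_add_left, real_inner_smul_left, real_inner_self_eq_norm_sq]
      using this
  have hFpos : 0 ≤ ⟪fderiv ℝ F (V t) (V' t), V' t⟫ := fderiv_inner_nonneg F hF hFd _ _
  have hCS : |⟪V t, V' t⟫| ≤ ‖V t‖ * ‖V' t‖ := abs_real_inner_le_norm _ _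
  have key : a t * ‖V' t‖ ^ 2 ≤ |a' t| * ‖V t‖ * ‖V' t‖ := by
    have h1 : a t * ‖V' t‖ ^ 2 ≤ - (a' t * ⟪V t, V' t⟫) := by linarith
    have h2 : - (a' t * ⟪V t, V' t⟫) ≤ |a' t * ⟪V t, V' t⟫| := neg_le_abs _
    have h3 : |a' t * ⟪V t, V' t⟫| = |a' t| * |⟪V t, V' t⟫| := abs_mul _ _
    have h4 : |a' t| * |⟪V t, V' t⟫| ≤ |a' t| * (‖V t‖ * ‖V' t‖) :=
      mul_le_mul_of_nonneg_left hCS (abs_nonneg _)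
    nlinarith
  have hmain : a t * ‖V' t‖ ≤ |a' t| * ‖V t‖ := by
    rcases eq_or_lt_of_le (norm_nonneg (V' t)) with h0 | h0
    · rw [← h0]
      simpa using mul_nonneg (abs_nonneg (a' t)) (norm_nonneg (V t))
    · have := (mul_le_mul_iff_left₀ h0).mp (by nlinarith : a t * ‖V' t‖ * ‖V' t‖ ≤ |a' t| * ‖V t‖ * ‖V' t‖)
      exact this
  refine ⟨hmain, ?_⟩
  rw [div_mul_eq_mul_div, le_div_iff₀ (hapos t ht)]
  linarith [hmain]
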